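/- Let (θ,θ') be a factor pair of an infinite set X. Then: (1) (θ,θ') is an atom of Fact(X) if and only if θ' is a p-relation for some prime p; (2) (θ,θ') is of finite height in Fact(X) (there is a finite bound on the sizes of chains in the interval [0,(θ,θ')]) if and only if θ' is an n-relation for some positive integer n. -/

import Mathlib

/-- A factor pair is a pair of equivalence relations with `θ ∩ θ' = Δ` and `θ ∘ θ' = ∇`. -/
def IsFactorPair {X : Type*} (θ θ' : Setoid X) : Prop :=
  (∀ x y : X, θ x y ∧ θ' x y ↔ x = y) ∧
  ∀ x y : X, Relation.Comp (⇑θ) (⇑θ') x y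

/-- `Fact X`, the set of factor pairs of `X`. -/
def FactPair (X : Type*) : Type _ :=
  {p : Setoid X × Setoid X // IsFactorPair p.1 p.2}

/-- The order on `Fact X`: `(θ,θ') ≤ (φ,φ')` iff `φ ⊆ θ`, `θ' ⊆ φ'` and `φ∘θ' = θ'∘φ`. -/
def FactLE {X : Type*} (p q : FactPair X) : Prop :=
  q.1.1 ≤ p.1.1 ∧ p.1.2 ≤ q.1.2 ∧
    Relation.Comp (⇑q.1.1) (⇑p.1.2) = Relation.Comp (⇑p.1.2) (⇑q.1.1)

def FactLT {X : Type*} (p q : FactPair X) : Prop :=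
  FactLE p q ∧ p ≠ q

/-- The orthocomplementation `(θ,θ')^⊥ = (θ',θ)` on `Fact X`. -/
def FactPerp {X : Type*} (p : FactPair X) : FactPair X :=
  ⟨(p.1.2, p.1.1), by
    obtain ⟨h1, h2⟩ := p.2
    refine ⟨fun x y => ⟨fun h => (h1 x y).1 ⟨h.2, h.1⟩, ?_⟩, fun x y => ?_⟩
    · rintro rfl
      exact ⟨p.1.2.refl' x, p.1.1.refl' x⟩
    · obtain ⟨z, hz1, hz2⟩ := h2 y x
      exact ⟨z, p.1.2.symm' hz2, p.1.1.symm' hz1⟩⟩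

/-- `0 = (∇,Δ)` in `Fact X`. -/
def FactZero (X : Type*) : FactPair X :=
  ⟨(⊤, ⊥), by
    refine ⟨fun x y => ⟨fun h => ?_, ?_⟩, fun x y => ⟨y, ?_, ?_⟩⟩
    · simpa [Setoid.bot_def] using h.2
    · rintro rfl
      exact ⟨(⊤ : Setoid X).refl' x, (⊥ : Setoid X).refl' x⟩
    · simp [Setoid.top_def]
    · simp [Setoid.bot_def]⟩

/-- `1 = (Δ,∇)` in `Fact X`. -/
def FactOne (X : Type*) : FactPair X :=
  ⟨(⊥, ⊤), by
    refine ⟨fun x y => ⟨fun h => ?_, ?_⟩, fun x y => ⟨x, ?_, ?_⟩⟩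
    · simpa [Setoid.bot_def] using h.1
    · rintro rfl
      exact ⟨(⊥ : Setoid X).refl' x, (⊤ : Setoid X).refl' x⟩
    · simp [Setoid.bot_def]
    · simp [Setoid.top_def]⟩

/-- An atom of `Fact X`. -/
def IsFactAtom {X : Type*} (a : FactPair X) : Prop :=
  FactLT (FactZero X) a ∧ ∀ x : FactPair X, FactLT (FactZero X) x → ¬ FactLT x a

/-- An `n`-relation: every equivalence class has exactly `n` elements. -/
def IsNRel {X : Type*} (n : ℕ) (θ : Setoid X) : Prop :=
  ∀ x : X, Nat.card {y // θ x y} = n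

/-- A `p`-atom: an atom `(φ,φ')` such that `φ'` is a `p`-relation. -/
def IsPAtom {X : Type*} (p : ℕ) (a : FactPair X) : Prop :=
  IsFactAtom a ∧ IsNRel p a.1.2

/-- The image `σ(θ) = {(σ x, σ y) : (x,y) ∈ θ}` of an equivalence relation under a
permutation. -/
def permSetoid {X : Type*} (σ : Equiv.Perm X) (θ : Setoid X) : Setoid X :=
  ⟨fun a b => θ (σ.symm a) (σ.symm b),
    ⟨fun a => θ.refl' _, fun h => θ.symm' h, fun h1 h2 => θ.trans' h1 h2⟩⟩

/-- The action `Γ(σ)(θ,θ') = (σ(θ),σ(θ'))` of a permutation on factor pairs. -/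
def permFactPair {X : Type*} (σ : Equiv.Perm X) (t : FactPair X) : FactPair X :=
  ⟨(permSetoid σ t.1.1, permSetoid σ t.1.2), by
    obtain ⟨h1, h2⟩ := t.2
    refine ⟨fun x y => ⟨fun h => ?_, ?_⟩, fun x y => ?_⟩
    · exact σ.symm.injective ((h1 (σ.symm x) (σ.symm y)).1 ⟨h.1, h.2⟩)
    · rintro rfl
      exact ⟨t.1.1.refl' _, t.1.2.refl' _⟩
    · obtain ⟨w, hw1, hw2⟩ := h2 (σ.symm x) (σ.symm y)
      refine ⟨σ w, ?_, ?_⟩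
      · show t.1.1 (σ.symm x) (σ.symm (σ w))
        simpa using hw1
      · show t.1.2 (σ.symm (σ w)) (σ.symm y)
        simpa using hw2⟩

/-- An automorphism of `Fact X`: a bijection preserving `≤` in both directions and
commuting with `⊥`. -/
def IsFactAut {X : Type*} (α : FactPair X → FactPair X) : Prop :=
  Function.Bijective α ∧
  (∀ p q : FactPair X, FactLE p q ↔ FactLE (α p) (α q)) ∧
  ∀ p : FactPair X, α (FactPerp p) = FactPerp (α p)

/-- `Eq*(X)`: the equivalence relations on `X` that are `n`-relations for some `n ≥ 1`. -/
def EqStar (X : Type*) : Type _ :=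
  {θ : Setoid X // ∃ n : ℕ, 0 < n ∧ IsNRel n θ}

/-- A regular equivalence relation: any two classes are equinumerous. -/
def IsRegularRel {X : Type*} (θ : Setoid X) : Prop :=
  ∀ x y : X, Nonempty ({z // θ x z} ≃ {z // θ y z})

/-- The action of a permutation on `Eq*(X)`. -/
def permEqStar {X : Type*} (σ : Equiv.Perm X) (θ : EqStar X) : EqStar X :=
  ⟨permSetoid σ θ.1, by
    obtain ⟨n, hn, hrel⟩ := θ.2
    refine ⟨n, hn, fun x => ?_⟩
    have e : {y // (permSetoid σ θ.1) x y} ≃ {y // θ.1 (σ.symm x) y} :=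
      σ.symm.subtypeEquiv fun y => Iff.rfl
    rw [Nat.card_congr e]
    exact hrel (σ.symm x)⟩

namespace FP
variable {X : Type*}

lemma factLE_zero (c : FactPair X) : FactLE (FactZero X) c := by
  refine ⟨le_top, bot_le, ?_⟩
  funext x y
  show (∃ z, c.1.1 x z ∧ (⊥ : Setoid X) z y) = (∃ z, (⊥ : Setoid X) x z ∧ c.1.1 z y)
  simp [Setoid.bot_def]

lemma factLE_refl (c : FactPair X) : FactLE c c := by
  refine ⟨le_refl _, le_refl _, ?_⟩
  funext x y
  obtain ⟨h1, h2⟩ := c.2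
  show (∃ z, c.1.1 x z ∧ c.1.2 z y) = (∃ z, c.1.2 x z ∧ c.1.1 z y)
  refine propext ⟨fun _ => ?_, fun _ => ?_⟩
  · obtain ⟨z, hz1, hz2⟩ := h2 y x
    exact ⟨z, c.1.2.symm' hz2, c.1.1.symm' hz1⟩
  · exact h2 x y

/-- uniqueness of the middle point -/
lemma mid_unique {θ θ' : Setoid X} (h : IsFactorPair θ θ') {x y z z' : X}
    (h1 : θ x z) (h2 : θ' z y) (h3 : θ x z') (h4 : θ' z' y) : z = z' :=
  (h.1 z z').1 ⟨θ.trans' (θ.symm' h1) h3, θ'.trans' h2 (θ'.symm' h4)⟩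

lemma eq_of_factLE_snd_eq {p q : FactPair X} (hle : FactLE p q) (hsnd : p.1.2 = q.1.2) :
    p = q := by
  have h11 : p.1.1 = q.1.1 := by
    refine le_antisymm ?_ hle.1
    rw [Setoid.le_def]
    intro x y hxy
    obtain ⟨z, hz1, hz2⟩ := q.2.2 x y
    have hz1' : p.1.1 x z := hle.1 hz1
    have : z = y := (p.2.1 z y).1 ⟨p.1.1.trans' (p.1.1.symm' hz1') hxy, hsnd ▸ hz2⟩
    exact this ▸ hz1
  exact Subtype.ext (Prod.ext h11 hsnd)

/-- θ' = ⊥ forces the pair to be zero -/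
lemma eq_zero_of_snd_bot {p : FactPair X} (hp : p.1.2 = ⊥) : p = FactZero X :=
  (eq_of_factLE_snd_eq (factLE_zero p) hp.symm).symm

/-- canonical decomposition of `X` from a factor pair -/
lemma exists_decomp {θ θ' : Setoid X} (h : IsFactorPair θ θ') (x₀ : X) :
    ∃ e : X ≃ ({z // θ x₀ z} × {z // θ' x₀ z}),
      (∀ x y, θ x y ↔ (e x).2 = (e y).2) ∧ (∀ x y, θ' x y ↔ (e x).1 = (e y).1) := by
  -- p x : the unique point with θ x (p x) ∧ θ' (p x) x₀
  have hp : ∀ x, ∃ z, θ x z ∧ θ' z x₀ := fun x => h.2 x x₀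
  -- q x : the unique point with θ' x (q x) ∧ θ (q x) x₀
  have hq : ∀ x, ∃ z, θ' x z ∧ θ z x₀ := by
    intro x
    obtain ⟨z, hz1, hz2⟩ := h.2 x₀ x
    exact ⟨z, θ'.symm' hz2, θ.symm' hz1⟩
  choose p hp1 hp2 using hp
  choose q hq1 hq2 using hq
  have q_unique : ∀ {x u}, θ' x u → θ u x₀ → q x = u := by
    intro x u h1 h2
    exact (h.1 (q x) u).1 ⟨θ.trans' (hq2 x) (θ.symm' h2), θ'.trans' (θ'.symm' (hq1 x)) h1⟩
  have p_unique : ∀ {x u}, θ x u → θ' u x₀ → p x = u := fun h1 h2 =>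
    mid_unique h (hp1 _) (hp2 _) h1 h2
  have hθp : ∀ x y, θ x y ↔ p x = p y := by
    intro x y
    constructor
    · intro hxy
      exact p_unique (θ.trans' hxy (hp1 y)) (hp2 y)
    · intro hpq
      exact θ.trans' (hp1 x) (hpq ▸ θ.symm' (hp1 y))
  have hθq : ∀ x y, θ' x y ↔ q x = q y := by
    intro x y
    constructor
    · intro hxy
      exact q_unique (θ'.trans' hxy (hq1 y)) (hq2 y)
    · intro hpq
      exact θ'.trans' (hq1 x) (hpq ▸ θ'.symm' (hq1 y))
  refine ⟨Equiv.ofBijective (fun x => (⟨q x, θ.symm' (hq2 x)⟩, ⟨p x, θ'.symm' (hp2 x)⟩)) ⟨?_, ?_⟩, ?_, ?_⟩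
  · intro x y hxy
    simp only [Prod.mk.injEq, Subtype.mk.injEq] at hxy
    exact (h.1 x y).1 ⟨(hθp x y).2 hxy.2, (hθq x y).2 hxy.1⟩
  · rintro ⟨⟨a, ha⟩, ⟨b, hb⟩⟩
    obtain ⟨z, hz1, hz2⟩ := h.2 b a
    refine ⟨z, ?_⟩
    simp only [Prod.mk.injEq, Subtype.mk.injEq]
    exact ⟨q_unique hz2 (θ.symm' ha), p_unique (θ.symm' hz1) (θ'.symm' hb)⟩
  · intro x y
    rw [hθp]
    simp [Equiv.ofBijective, Subtype.ext_iff]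
  · intro x y
    rw [hθq]
    simp [Equiv.ofBijective, Subtype.ext_iff]

/-- every `θ'`-class is equinumerous with `B` -/
lemma card_class {A B : Type*} (e : X ≃ A × B) {θ' : Setoid X}
    (hθ' : ∀ x y, θ' x y ↔ (e x).1 = (e y).1) (x : X) :
    Nat.card {z // θ' x z} = Nat.card B := by
  refine Nat.card_congr ⟨fun z => (e z.1).2, fun b => ⟨e.symm ((e x).1, b), ?_⟩, ?_, ?_⟩
  · rw [hθ']
    simp
  · rintro ⟨z, hz⟩
    rw [hθ'] at hz
    simp only [Subtype.mk.injEq]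
    rw [hz, Prod.mk.eta]
    exact e.symm_apply_apply z
  · intro b
    simp


section Mid
variable {A B₁ B₂ : Type*}

def midφ (e : X ≃ A × (B₁ × B₂)) : Setoid X :=
  ⟨fun x y => (e x).2.2 = (e y).2.2, ⟨fun _ => rfl, Eq.symm, Eq.trans⟩⟩

def midφ' (e : X ≃ A × (B₁ × B₂)) : Setoid X :=
  ⟨fun x y => (e x).1 = (e y).1 ∧ (e x).2.1 = (e y).2.1,
   ⟨fun _ => ⟨rfl, rfl⟩, fun h => ⟨h.1.symm, h.2.symm⟩,
    fun h1 h2 => ⟨h1.1.trans h2.1, h1.2.trans h2.2⟩⟩⟩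

lemma midφ_apply (e : X ≃ A × (B₁ × B₂)) (x y : X) :
    midφ e x y ↔ (e x).2.2 = (e y).2.2 := Iff.rfl

lemma midφ'_apply (e : X ≃ A × (B₁ × B₂)) (x y : X) :
    midφ' e x y ↔ (e x).1 = (e y).1 ∧ (e x).2.1 = (e y).2.1 := Iff.rfl

lemma mid_isFactorPair (e : X ≃ A × (B₁ × B₂)) : IsFactorPair (midφ e) (midφ' e) := by
  constructor
  · intro x y
    constructor
    · rintro ⟨h1, h2, h3⟩
      exact e.injective (Prod.ext h2 (Prod.ext h3 h1))
    · rintro rfl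
      exact ⟨rfl, rfl, rfl⟩
  · intro x y
    refine ⟨e.symm ((e y).1, ((e y).2.1, (e x).2.2)), ?_, ?_⟩
    · show (e x).2.2 = (e _).2.2
      simp
    · show (e _).1 = (e y).1 ∧ (e _).2.1 = (e y).2.1
      simp

def midPair (e : X ≃ A × (B₁ × B₂)) : FactPair X :=
  ⟨(midφ e, midφ' e), mid_isFactorPair e⟩

lemma mid_le (e : X ≃ A × (B₁ × B₂)) {θ θ' : Setoid X} (h : IsFactorPair θ θ')
    (hθ : ∀ x y, θ x y ↔ (e x).2 = (e y).2)
    (hθ' : ∀ x y, θ' x y ↔ (e x).1 = (e y).1) :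
    FactLE (midPair e) ⟨(θ, θ'), h⟩ := by
  refine ⟨?_, ?_, ?_⟩
  · rw [Setoid.le_def]
    intro x y hxy
    rw [hθ] at hxy
    show (e x).2.2 = (e y).2.2
    rw [hxy]
  · rw [Setoid.le_def]
    intro x y hxy
    rw [hθ']
    exact hxy.1
  · funext x y
    show (∃ z, θ x z ∧ midφ' e z y) = (∃ z, midφ' e x z ∧ θ z y)
    have key1 : (∃ z, θ x z ∧ midφ' e z y) ↔ (e x).2.1 = (e y).2.1 := by
      constructor
      · rintro ⟨z, hz1, hz2⟩
        rw [hθ] at hz1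
        rw [midφ'_apply] at hz2
        rw [show (e x).2.1 = (e z).2.1 by rw [hz1]]
        exact hz2.2
      · intro hb
        refine ⟨e.symm ((e y).1, (e x).2), ?_, ?_⟩
        · rw [hθ]; simp
        · rw [midφ'_apply]; simpa using hb
    have key2 : (∃ z, midφ' e x z ∧ θ z y) ↔ (e x).2.1 = (e y).2.1 := by
      constructor
      · rintro ⟨z, hz1, hz2⟩
        rw [hθ] at hz2
        rw [midφ'_apply] at hz1
        rw [hz1.2, hz2]
      · intro hb
        refine ⟨e.symm ((e x).1, ((e x).2.1, (e y).2.2)), ?_, ?_⟩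
        · rw [midφ'_apply]; simp
        · rw [hθ]
          show (e _).2 = (e y).2
          simp only [Equiv.apply_symm_apply]
          rw [hb]
    rw [propext key1, propext key2]

lemma mid_ne_zero (e : X ≃ A × (B₁ × B₂)) (a : A) (b₁ : B₁) {b c : B₂} (hbc : b ≠ c) :
    midPair e ≠ FactZero X := by
  intro hp
  have h2 : midPair e |>.1.2 = ⊥ := by rw [hp]; rfl
  have : midφ' e (e.symm (a, (b₁, b))) (e.symm (a, (b₁, c))) := by
    rw [midφ'_apply]; simp
  rw [show midφ' e = (midPair e).1.2 from rfl, h2] at this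
  have : e.symm (a, (b₁, b)) = e.symm (a, (b₁, c)) := by
    simpa [Setoid.bot_def] using this
  exact hbc (by simpa using congrArg (fun t => (e t).2.2) this)

lemma mid_ne_top (e : X ≃ A × (B₁ × B₂)) {θ θ' : Setoid X} (h : IsFactorPair θ θ')
    (hθ' : ∀ x y, θ' x y ↔ (e x).1 = (e y).1)
    (a : A) (b₂ : B₂) {b c : B₁} (hbc : b ≠ c) :
    midPair e ≠ ⟨(θ, θ'), h⟩ := by
  intro hp
  have h2 : midφ' e = θ' := congrArg (fun t => t.1.2) hp
  have : θ' (e.symm (a, (b, b₂))) (e.symm (a, (c, b₂))) := by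
    rw [hθ']; simp
  rw [← h2, midφ'_apply] at this
  exact hbc (by simpa using this.2)

end Mid

section Chain
variable {A B₀ : Type*} {N : ℕ}

def chφ (e : X ≃ A × ((Fin N → Fin 2) × B₀)) (k : ℕ) : Setoid X :=
  ⟨fun x y => ∀ i : Fin N, (i : ℕ) < k → (e x).2.1 i = (e y).2.1 i,
   ⟨fun _ _ _ => rfl, fun h i hi => (h i hi).symm, fun h1 h2 i hi => (h1 i hi).trans (h2 i hi)⟩⟩

def chφ' (e : X ≃ A × ((Fin N → Fin 2) × B₀)) (k : ℕ) : Setoid X :=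
  ⟨fun x y => (e x).1 = (e y).1 ∧ (e x).2.2 = (e y).2.2 ∧
      ∀ i : Fin N, k ≤ (i : ℕ) → (e x).2.1 i = (e y).2.1 i,
   ⟨fun _ => ⟨rfl, rfl, fun _ _ => rfl⟩,
    fun h => ⟨h.1.symm, h.2.1.symm, fun i hi => (h.2.2 i hi).symm⟩,
    fun h1 h2 => ⟨h1.1.trans h2.1, h1.2.1.trans h2.2.1,
      fun i hi => (h1.2.2 i hi).trans (h2.2.2 i hi)⟩⟩⟩

lemma chφ_apply (e : X ≃ A × ((Fin N → Fin 2) × B₀)) (k : ℕ) (x y : X) :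
    chφ e k x y ↔ ∀ i : Fin N, (i : ℕ) < k → (e x).2.1 i = (e y).2.1 i := Iff.rfl

lemma chφ'_apply (e : X ≃ A × ((Fin N → Fin 2) × B₀)) (k : ℕ) (x y : X) :
    chφ' e k x y ↔ (e x).1 = (e y).1 ∧ (e x).2.2 = (e y).2.2 ∧
      ∀ i : Fin N, k ≤ (i : ℕ) → (e x).2.1 i = (e y).2.1 i := Iff.rfl

lemma ch_isFactorPair (e : X ≃ A × ((Fin N → Fin 2) × B₀)) (k : ℕ) :
    IsFactorPair (chφ e k) (chφ' e k) := by
  constructor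
  · intro x y
    constructor
    · rintro ⟨h1, h2, h3, h4⟩
      refine e.injective (Prod.ext h2 (Prod.ext (funext fun i => ?_) h3))
      rcases lt_or_ge (i : ℕ) k with hi | hi
      · exact h1 i hi
      · exact h4 i hi
    · rintro rfl
      exact ⟨fun _ _ => rfl, rfl, rfl, fun _ _ => rfl⟩
  · intro x y
    refine ⟨e.symm ((e y).1, (fun i => if (i : ℕ) < k then (e x).2.1 i else (e y).2.1 i,
      (e y).2.2)), ?_, ?_⟩
    · rw [chφ_apply]
      intro i hi
      simp [hi]
    · rw [chφ'_apply]
      refine ⟨by simp, by simp, fun i hi => ?_⟩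
      simp [Nat.not_lt_of_le hi]

def chPair (e : X ≃ A × ((Fin N → Fin 2) × B₀)) (k : ℕ) : FactPair X :=
  ⟨(chφ e k, chφ' e k), ch_isFactorPair e k⟩

lemma ch_le_ch (e : X ≃ A × ((Fin N → Fin 2) × B₀)) {k l : ℕ} (hkl : k ≤ l) :
    FactLE (chPair e k) (chPair e l) := by
  refine ⟨?_, ?_, ?_⟩
  · rw [Setoid.le_def]
    intro x y hxy
    exact fun i hi => hxy i (lt_of_lt_of_le hi hkl)
  · rw [Setoid.le_def]
    rintro x y ⟨h1, h2, h3⟩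
    exact ⟨h1, h2, fun i hi => h3 i (le_trans hkl hi)⟩
  · funext x y
    show (∃ z, chφ e l x z ∧ chφ' e k z y) = (∃ z, chφ' e k x z ∧ chφ e l z y)
    have key1 : (∃ z, chφ e l x z ∧ chφ' e k z y) ↔
        ∀ i : Fin N, k ≤ (i : ℕ) → (i : ℕ) < l → (e x).2.1 i = (e y).2.1 i := by
      constructor
      · rintro ⟨z, hz1, hz2⟩
        intro i hik hil
        exact (hz1 i hil).trans (hz2.2.2 i hik)
      · intro hcond
        refine ⟨e.symm ((e y).1, (fun i => if (i : ℕ) < l then (e x).2.1 i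
          else (e y).2.1 i, (e y).2.2)), ?_, ?_⟩
        · intro i hi
          simp [hi]
        · refine ⟨by simp, by simp, fun i hi => ?_⟩
          rcases lt_or_ge (i : ℕ) l with h' | h'
          · simpa [h'] using hcond i hi h'
          · simp [Nat.not_lt_of_le h']
    have key2 : (∃ z, chφ' e k x z ∧ chφ e l z y) ↔
        ∀ i : Fin N, k ≤ (i : ℕ) → (i : ℕ) < l → (e x).2.1 i = (e y).2.1 i := by
      constructor
      · rintro ⟨z, hz1, hz2⟩
        intro i hik hil
        exact (hz1.2.2 i hik).trans (hz2 i hil)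
      · intro hcond
        refine ⟨e.symm ((e x).1, (fun i => if (i : ℕ) < l then (e y).2.1 i
          else (e x).2.1 i, (e x).2.2)), ?_, ?_⟩
        · refine ⟨by simp, by simp, fun i hi => ?_⟩
          rcases lt_or_ge (i : ℕ) l with h' | h'
          · simpa [h'] using hcond i hi h'
          · simp [Nat.not_lt_of_le h']
        · intro i hi
          simp [hi]
    rw [propext key1, propext key2]

lemma ch_le_top (e : X ≃ A × ((Fin N → Fin 2) × B₀)) {θ θ' : Setoid X}
    (h : IsFactorPair θ θ')
    (hθ : ∀ x y, θ x y ↔ (e x).2 = (e y).2)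
    (hθ' : ∀ x y, θ' x y ↔ (e x).1 = (e y).1) (k : ℕ) :
    FactLE (chPair e k) ⟨(θ, θ'), h⟩ := by
  refine ⟨?_, ?_, ?_⟩
  · rw [Setoid.le_def]
    intro x y hxy
    rw [hθ] at hxy
    intro i _
    rw [hxy]
  · rw [Setoid.le_def]
    rintro x y ⟨h1, _, _⟩
    rw [hθ']
    exact h1
  · funext x y
    show (∃ z, θ x z ∧ chφ' e k z y) = (∃ z, chφ' e k x z ∧ θ z y)
    have key1 : (∃ z, θ x z ∧ chφ' e k z y) ↔
        ((e x).2.2 = (e y).2.2 ∧ ∀ i : Fin N, k ≤ (i : ℕ) → (e x).2.1 i = (e y).2.1 i) := by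
      constructor
      · rintro ⟨z, hz1, hz2⟩
        rw [hθ] at hz1
        refine ⟨?_, fun i hi => ?_⟩
        · rw [show (e x).2.2 = (e z).2.2 by rw [hz1]]
          exact hz2.2.1
        · rw [show (e x).2.1 i = (e z).2.1 i by rw [hz1]]
          exact hz2.2.2 i hi
      · rintro ⟨h1, h2⟩
        refine ⟨e.symm ((e y).1, (e x).2), ?_, ?_⟩
        · rw [hθ]; simp
        · refine ⟨by simp, by simpa using h1, fun i hi => by simpa using h2 i hi⟩
    have key2 : (∃ z, chφ' e k x z ∧ θ z y) ↔
        ((e x).2.2 = (e y).2.2 ∧ ∀ i : Fin N, k ≤ (i : ℕ) → (e x).2.1 i = (e y).2.1 i) := by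
      constructor
      · rintro ⟨z, hz1, hz2⟩
        rw [hθ] at hz2
        refine ⟨hz1.2.1.trans (by rw [hz2]), fun i hi => (hz1.2.2 i hi).trans (by rw [hz2])⟩
      · rintro ⟨h1, h2⟩
        refine ⟨e.symm ((e x).1, (e y).2), ?_, ?_⟩
        · refine ⟨by simp, by simpa using h1, fun i hi => by simpa using h2 i hi⟩
        · rw [hθ]; simp
    rw [propext key1, propext key2]

lemma ch_ne (e : X ≃ A × ((Fin N → Fin 2) × B₀)) (a : A) (b₀ : B₀) {k l : ℕ}
    (hkl : k < l) (hkN : k < N) : chPair e k ≠ chPair e l := by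
  intro hp
  have h2 : chφ' e k = chφ' e l := congrArg (fun t => t.1.2) hp
  set x := e.symm (a, (fun _ => 0, b₀)) with hx
  set y := e.symm (a, (fun i => if (i : ℕ) = k then 1 else 0, b₀)) with hy
  have hyl : chφ' e l x y := by
    rw [chφ'_apply]
    refine ⟨by simp [hx, hy], by simp [hx, hy], fun i hi => ?_⟩
    have : (i : ℕ) ≠ k := by omega
    simp [hx, hy, this]
  rw [← h2, chφ'_apply] at hyl
  have := hyl.2.2 ⟨k, hkN⟩ (by simp)
  simp [hx, hy] at this
end Chain

section Main
variable {X : Type*}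

/-- all classes of the second relation of a factor pair are equinumerous -/
lemma snd_card_class_eq (c : FactPair X) (x y : X) :
    Nat.card {z // c.1.2 x z} = Nat.card {z // c.1.2 y z} := by
  obtain ⟨e, hθ, hθ'⟩ := exists_decomp c.2 x
  rw [card_class e hθ' x, card_class e hθ' y]

lemma snd_eq_of_le_card {c₁ c₂ : FactPair X} (hle : c₁.1.2 ≤ c₂.1.2)
    (hfin : ∀ y : X, Finite {z // c₂.1.2 y z})
    (hcard : ∀ y : X, Nat.card {z // c₁.1.2 y z} = Nat.card {z // c₂.1.2 y z}) :
    c₁.1.2 = c₂.1.2 := by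
  rw [Setoid.le_def] at hle
  refine Setoid.ext fun y z => ⟨fun hz => hle hz, fun hz => ?_⟩
  haveI := hfin y
  have hf : Function.Bijective (fun w : {z // c₁.1.2 y z} => (⟨w.1, hle w.2⟩ : {z // c₂.1.2 y z})) := by
    rw [Nat.bijective_iff_injective_and_card]
    refine ⟨fun u v huv => ?_, hcard y⟩
    simp only [Subtype.mk.injEq] at huv
    exact Subtype.ext huv
  obtain ⟨w, hw⟩ := hf.2 ⟨z, hz⟩
  have : w.1 = z := congrArg Subtype.val hw
  exact this ▸ w.2

/-- the size of classes of a finer equivalence divides the size of classes of a coarser one -/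
lemma card_class_dvd {φ' θ' : Setoid X} (hle : φ' ≤ θ') (x₀ : X)
    (hreg : ∀ y : X, Nat.card {z // φ' y z} = Nat.card {z // φ' x₀ z})
    (hfin : Finite {z // θ' x₀ z}) :
    Nat.card {z // φ' x₀ z} ∣ Nat.card {z // θ' x₀ z} := by
  rw [Setoid.le_def] at hle
  set C := {z // θ' x₀ z} with hC
  set d := Nat.card {z // φ' x₀ z} with hd
  letI s : Setoid C := ⟨fun u v => φ' u.1 v.1,
    ⟨fun u => φ'.refl' u.1, fun h => φ'.symm' h, fun h1 h2 => φ'.trans' h1 h2⟩⟩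
  have fibEquiv : ∀ q : Quotient s, Nonempty ({u : C // Quotient.mk s u = q} ≃ {z : X // φ' q.out.1 z}) := by
    intro q
    refine ⟨Equiv.ofBijective (fun u => ⟨u.1.1, ?_⟩) ⟨?_, ?_⟩⟩
    · have h1 : s u.1 q.out := (Quotient.eq (r := s) (x := u.1) (y := q.out)).1 (u.2.trans q.out_eq.symm)
      exact φ'.symm' h1
    · intro u v huv
      simp only [Subtype.mk.injEq] at huv
      exact Subtype.ext (Subtype.ext huv)
    · intro z
      have hz : θ' x₀ z.1 := θ'.trans' q.out.2 (hle z.2)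
      have hmem : Quotient.mk s (⟨z.1, hz⟩ : C) = q :=
        ((Quotient.eq (r := s) (x := ⟨z.1, hz⟩) (y := q.out)).2 (φ'.symm' z.2)).trans q.out_eq
      exact ⟨⟨⟨z.1, hz⟩, hmem⟩, rfl⟩
  have fibCard : ∀ q : Quotient s, Nat.card {u : C // Quotient.mk s u = q} = d := by
    intro q
    rw [Nat.card_congr (fibEquiv q).some, hreg q.out.1]
  have fibFin : ∀ q : Quotient s, Nonempty ({u : C // Quotient.mk s u = q} ≃ Fin d) := by
    intro q
    haveI : Finite {u : C // Quotient.mk s u = q} := Subtype.finite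
    exact ⟨Finite.equivFinOfCardEq (fibCard q)⟩
  have e1 : C ≃ Quotient s × Fin d := by
    refine ((Equiv.sigmaFiberEquiv (Quotient.mk s)).symm.trans ?_).trans
      (Equiv.sigmaEquivProd (Quotient s) (Fin d))
    exact Equiv.sigmaCongrRight fun q => (fibFin q).some
  rw [show Nat.card {z // θ' x₀ z} = Nat.card C from rfl, Nat.card_congr e1, Nat.card_prod]
  simp [mul_comm]

/-- an infinite type absorbs a finite nonempty factor -/
lemma infinite_absorb (B : Type*) [Infinite B] (F : Type) [Fintype F] [Nonempty F] :
    Nonempty (B ≃ F × B) := by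
  rw [← Cardinal.eq, Cardinal.mk_prod, Cardinal.mk_fintype F, Cardinal.lift_natCast,
    Cardinal.lift_id']
  exact (Cardinal.mul_eq_right (Cardinal.aleph0_le_mk B)
    (le_of_lt (lt_of_lt_of_le (Cardinal.nat_lt_aleph0 _) (Cardinal.aleph0_le_mk B)))
    (by simp [Fintype.card_ne_zero])).symm

/-- transfer the coordinate description along an equivalence of the second factor -/
lemma transfer_equiv {A B C : Type*} (e : X ≃ A × B) (eB : B ≃ C) {θ θ' : Setoid X}
    (hθ : ∀ x y, θ x y ↔ (e x).2 = (e y).2)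
    (hθ' : ∀ x y, θ' x y ↔ (e x).1 = (e y).1) :
    (∀ x y, θ x y ↔ ((e.trans ((Equiv.refl A).prodCongr eB)) x).2
        = ((e.trans ((Equiv.refl A).prodCongr eB)) y).2) ∧
    (∀ x y, θ' x y ↔ ((e.trans ((Equiv.refl A).prodCongr eB)) x).1
        = ((e.trans ((Equiv.refl A).prodCongr eB)) y).1) := by
  constructor
  · intro x y
    rw [hθ]
    simp [Equiv.prodCongr, eB.injective.eq_iff]
  · intro x y
    rw [hθ']
    simp [Equiv.prodCongr]

end Main

end FP
/-- For a factor pair `(θ,θ')` of an infinite set `X`: (1) `(θ,θ')` is an atom of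
`Fact X` iff `θ'` is a `p`-relation for some prime `p`; (2) `(θ,θ')` has finite height
(the sizes of chains in `[0,(θ,θ')]` are boundedly finite) iff `θ'` is an `n`-relation
for some positive `n`. -/
theorem factPair_atom_and_finite_height (X : Type*) [Infinite X]
    (θ θ' : Setoid X) (h : IsFactorPair θ θ') :
    (IsFactAtom (⟨(θ, θ'), h⟩ : FactPair X) ↔ ∃ p : ℕ, p.Prime ∧ IsNRel p θ') ∧
    ((∃ N : ℕ, ∀ C : Finset (FactPair X),
        (∀ c ∈ C, FactLE (FactZero X) c ∧ FactLE c ⟨(θ, θ'), h⟩) →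
        IsChain FactLE (↑C : Set (FactPair X)) → C.card ≤ N) ↔
      ∃ n : ℕ, 0 < n ∧ IsNRel n θ') := by
  classical
  obtain ⟨x₀⟩ := (inferInstance : Nonempty X)
  obtain ⟨e, hθ, hθ'⟩ := FP.exists_decomp h x₀
  haveI : Nonempty {z // θ' x₀ z} := ⟨⟨x₀, θ'.refl' x₀⟩⟩
  haveI : Nonempty {z // θ x₀ z} := ⟨⟨x₀, θ.refl' x₀⟩⟩
  have hcard : ∀ x : X, Nat.card {z // θ' x z} = Nat.card {z // θ' x₀ z} := fun x => FP.card_class e hθ' x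
  constructor
  · constructor
    · rintro ⟨hlt0, hmax⟩
      have hBprime : (Nat.card {z // θ' x₀ z}).Prime := by
        by_contra hnp
        by_cases hfin : Finite {z // θ' x₀ z}
        · haveI := hfin
          have hn1 : 0 < Nat.card {z // θ' x₀ z} := Nat.card_pos
          rcases eq_or_lt_of_le (show 1 ≤ _ from hn1) with h1 | h2
          · -- Nat.card {z // θ' x₀ z} = 1 : θ' = ⊥ and the pair is zero
            haveI hBsub : Subsingleton {z // θ' x₀ z} := (Nat.card_eq_one_iff_unique.1 h1.symm).1
            have hsub : θ' = ⊥ := by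
              refine Setoid.ext fun u v => ?_
              rw [show ((⊥ : Setoid X) u v) = (u = v) by rw [Setoid.bot_def]]
              constructor
              · intro huv
                refine e.injective (Prod.ext ((hθ' u v).1 huv) (Subsingleton.elim _ _))
              · rintro rfl
                exact θ'.refl' u
            exact hlt0.2 ((FP.eq_zero_of_snd_bot (p := ⟨(θ, θ'), h⟩) hsub).symm)
          · obtain ⟨m, hmdvd, hm2, hmlt⟩ := Nat.exists_dvd_of_not_prime2 h2 hnp
            obtain ⟨t, ht⟩ := hmdvd
            have ht2 : 2 ≤ t := by
              rcases t with _ | t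
              · omega
              · rcases t with _ | t
                · omega
                · omega
            have eB : {z // θ' x₀ z} ≃ Fin m × Fin t :=
              (Finite.equivFinOfCardEq ht).trans finProdFinEquiv.symm
            obtain ⟨hθ2, hθ'2⟩ := FP.transfer_equiv e eB hθ hθ'
            set e2 := e.trans ((Equiv.refl {z // θ x₀ z}).prodCongr eB) with he2
            have hb2 : (⟨0, by omega⟩ : Fin t) ≠ ⟨1, by omega⟩ := by
              intro hh
              simpa using congrArg Fin.val hh
            have hb1 : (⟨0, by omega⟩ : Fin m) ≠ ⟨1, by omega⟩ := by
              intro hh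
              simpa using congrArg Fin.val hh
            exact hmax (FP.midPair e2)
              ⟨FP.factLE_zero _,
                Ne.symm (FP.mid_ne_zero e2 (Classical.arbitrary {z // θ x₀ z}) ⟨0, by omega⟩ hb2)⟩
              ⟨FP.mid_le e2 h hθ2 hθ'2,
                FP.mid_ne_top e2 h hθ'2 (Classical.arbitrary {z // θ x₀ z}) ⟨0, by omega⟩ hb1⟩
        · haveI := not_finite_iff_infinite.1 hfin
          obtain ⟨eB⟩ := FP.infinite_absorb {z // θ' x₀ z} (Fin 2)
          obtain ⟨hθ2, hθ'2⟩ := FP.transfer_equiv e eB hθ hθ'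
          set e2 := e.trans ((Equiv.refl {z // θ x₀ z}).prodCongr eB) with he2
          obtain ⟨b, c, hbc⟩ := exists_pair_ne {z // θ' x₀ z}
          have hb1 : (0 : Fin 2) ≠ 1 := by decide
          exact hmax (FP.midPair e2)
            ⟨FP.factLE_zero _,
              Ne.symm (FP.mid_ne_zero e2 (Classical.arbitrary {z // θ x₀ z}) 0 hbc)⟩
            ⟨FP.mid_le e2 h hθ2 hθ'2,
              FP.mid_ne_top e2 h hθ'2 (Classical.arbitrary {z // θ x₀ z}) b hb1⟩
      exact ⟨Nat.card {z // θ' x₀ z}, hBprime, fun x => hcard x⟩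
    · rintro ⟨p, hp, hrel⟩
      have hBp : Nat.card {z // θ' x₀ z} = p := (hcard x₀).symm.trans (hrel x₀)
      have hfinθ' : ∀ y : X, Finite {z // θ' y z} := fun y =>
        Nat.finite_of_card_ne_zero (by rw [hrel y]; exact hp.pos.ne')
      constructor
      · refine ⟨FP.factLE_zero _, fun h0 => ?_⟩
        have hbot : θ' = ⊥ := (congrArg (fun t => t.1.2) h0).symm
        have h1 : Nat.card {z // θ' x₀ z} = 1 := by
          rw [Nat.card_eq_one_iff_unique]
          constructor
          · constructor
            intro u v
            have hu : x₀ = u.1 := by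
              have h5 : (⊥ : Setoid X) x₀ u.1 := by rw [← hbot]; exact u.2
              simpa [Setoid.bot_def] using h5
            have hv : x₀ = v.1 := by
              have h5 : (⊥ : Setoid X) x₀ v.1 := by rw [← hbot]; exact v.2
              simpa [Setoid.bot_def] using h5
            exact Subtype.ext (hu ▸ hv ▸ rfl)
          · exact ⟨⟨x₀, θ'.refl' x₀⟩⟩
        rw [hrel x₀] at h1
        exact hp.one_lt.ne' h1
      · rintro x ⟨_, hx0⟩ ⟨hxle, hxne⟩
        have hreg : ∀ y, Nat.card {z // x.1.2 y z} = Nat.card {z // x.1.2 x₀ z} := fun y =>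
          FP.snd_card_class_eq x y x₀
        have hdvd := FP.card_class_dvd hxle.2.1 x₀ hreg (hfinθ' x₀)
        rw [hrel x₀] at hdvd
        rcases hp.eq_one_or_self_of_dvd _ hdvd with hd1 | hdp
        · have hxbot : x.1.2 = ⊥ := by
            refine Setoid.ext fun u v => ?_
            rw [show ((⊥ : Setoid X) u v) = (u = v) by rw [Setoid.bot_def]]
            constructor
            · intro huv
              have hcard1 : Nat.card {z // x.1.2 u z} = 1 := (hreg u).trans hd1
              haveI := (Nat.card_eq_one_iff_unique.1 hcard1).1
              have h3 : (⟨u, x.1.2.refl' u⟩ : {z // x.1.2 u z}) = ⟨v, huv⟩ :=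
                Subsingleton.elim _ _
              exact congrArg Subtype.val h3
            · rintro rfl
              exact x.1.2.refl' u
          exact hx0 (FP.eq_zero_of_snd_bot hxbot).symm
        · have hsnd : x.1.2 = θ' := by
            refine FP.snd_eq_of_le_card (c₁ := x) (c₂ := ⟨(θ, θ'), h⟩) hxle.2.1 hfinθ' ?_
            intro y
            rw [hreg y, hdp, hrel y]
          exact hxne (FP.eq_of_factLE_snd_eq hxle hsnd)
  · constructor
    · rintro ⟨N, hbound⟩
      by_cases hfin : Finite {z // θ' x₀ z}
      · haveI := hfin
        exact ⟨Nat.card {z // θ' x₀ z}, Nat.card_pos, fun x => hcard x⟩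
      · exfalso
        haveI := not_finite_iff_infinite.1 hfin
        obtain ⟨eB⟩ := FP.infinite_absorb {z // θ' x₀ z} (Fin N → Fin 2)
        obtain ⟨hθ2, hθ'2⟩ := FP.transfer_equiv e eB hθ hθ'
        set e2 := e.trans ((Equiv.refl {z // θ x₀ z}).prodCongr eB) with he2
        set C : Finset (FactPair X) := (Finset.range (N + 1)).image (fun k => FP.chPair e2 k)
          with hc
        have hne' : ∀ {k l : ℕ}, k < l → l < N + 1 → FP.chPair e2 k ≠ FP.chPair e2 l :=
          fun hkl hl => FP.ch_ne e2 (Classical.arbitrary {z // θ x₀ z}) (Classical.arbitrary {z // θ' x₀ z}) hkl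
            (by omega)
        have hinj : Set.InjOn (fun k => FP.chPair e2 k) ↑(Finset.range (N + 1)) := by
          intro k hk l hl hkl_eq
          simp only [Finset.coe_range, Set.mem_Iio] at hk hl
          by_contra hne
          rcases Nat.lt_or_ge k l with h' | h'
          · exact hne' h' hl hkl_eq
          · exact hne' (lt_of_le_of_ne h' (Ne.symm hne)) hk hkl_eq.symm
        have hcardC : C.card = N + 1 := by
          rw [hc, Finset.card_image_of_injOn hinj, Finset.card_range]
        have hmem : ∀ c ∈ C, FactLE (FactZero X) c ∧ FactLE c ⟨(θ, θ'), h⟩ := by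
          intro c hcmem
          rw [hc, Finset.mem_image] at hcmem
          obtain ⟨k, _, rfl⟩ := hcmem
          exact ⟨FP.factLE_zero _, FP.ch_le_top e2 h hθ2 hθ'2 k⟩
        have hchain : IsChain FactLE (↑C : Set (FactPair X)) := by
          intro u hu v hv _
          rw [hc] at hu hv
          simp only [Finset.coe_image, Finset.coe_range, Set.mem_image, Set.mem_Iio] at hu hv
          obtain ⟨k, _, rfl⟩ := hu
          obtain ⟨l, _, rfl⟩ := hv
          rcases le_total k l with h' | h'
          · exact Or.inl (FP.ch_le_ch e2 h')
          · exact Or.inr (FP.ch_le_ch e2 h')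
        have := hbound C hmem hchain
        omega
    · rintro ⟨n, hn, hrel⟩
      refine ⟨n, fun C hC hchain => ?_⟩
      have hfinθ' : ∀ y : X, Finite {z // θ' y z} := fun y =>
        Nat.finite_of_card_ne_zero (by rw [hrel y]; omega)
      set D : FactPair X → ℕ := fun c => Nat.card {z // c.1.2 x₀ z} with hD
      have hfincl : ∀ c ∈ C, ∀ y : X, Finite {z // c.1.2 y z} := by
        intro c hcm y
        haveI := hfinθ' y
        exact Finite.of_injective
          (fun w : {z // c.1.2 y z} => (⟨w.1, Setoid.le_def.1 (hC c hcm).2.2.1 w.2⟩ :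
            {z // θ' y z}))
          (fun u v huv => Subtype.ext (by simpa using congrArg Subtype.val huv))
      have key : ∀ c₁ ∈ C, ∀ c₂ ∈ C, FactLE c₁ c₂ → D c₁ = D c₂ → c₁ = c₂ := by
        intro c₁ h1 c₂ h2 hle hDeq
        refine FP.eq_of_factLE_snd_eq hle (FP.snd_eq_of_le_card hle.2.1 (hfincl c₂ h2) ?_)
        intro y
        rw [FP.snd_card_class_eq c₁ y x₀, FP.snd_card_class_eq c₂ y x₀]
        exact hDeq
      have hinj : Set.InjOn D ↑C := by
        intro c₁ h1 c₂ h2 hDeq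
        by_contra hne
        rcases hchain h1 h2 hne with hle | hle
        · exact hne (key _ h1 _ h2 hle hDeq)
        · exact hne ((key _ h2 _ h1 hle hDeq.symm).symm)
      have hsub : C.image D ⊆ Finset.Icc 1 n := by
        intro m hm
        rw [Finset.mem_image] at hm
        obtain ⟨c, hcm, rfl⟩ := hm
        rw [Finset.mem_Icc]
        constructor
        · haveI := hfincl c hcm x₀
          haveI : Nonempty {z // c.1.2 x₀ z} := ⟨⟨x₀, c.1.2.refl' x₀⟩⟩
          exact Nat.card_pos
        · haveI := hfinθ' x₀
          have hle := Nat.card_le_card_of_injective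
            (fun w : {z // c.1.2 x₀ z} => (⟨w.1, Setoid.le_def.1 (hC c hcm).2.2.1 w.2⟩ :
              {z // θ' x₀ z}))
            (fun u v huv => Subtype.ext (by simpa using congrArg Subtype.val huv))
          rw [hrel x₀] at hle
          exact hle
      calc C.card = (C.image D).card := (Finset.card_image_of_injOn hinj).symm
        _ ≤ (Finset.Icc 1 n).card := Finset.card_le_card hsub
        _ = n := by simp
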